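/- Every L_j partial tour subgraph belongs to one of the seven equivalence classes UU1C, 0E1C, E01C, EE1C, EE2C, 000C, 001C (i.e., the triple consisting of the degree parities of a_j and b_j and the number of nonempty connected components is one of these seven combinations). Moreover, an L_j PTS of class 000C exists only if no pick vertex of P lies in L_j, and an L_j PTS of class 001C exists only if no pick vertex of P lies in G − L_j. -/

import Mathlib

/-- Degree parity class of a vertex: degree zero, odd degree, or even positive degree. -/
inductive DegClass : Type
  | zero : DegClass
  | odd : DegClass
  | evenPos : DegClass
deriving DecidableEq

/-- The parity class of a natural number (a degree). -/
def degClass (d : ℕ) : DegClass :=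
  if d = 0 then .zero else if d % 2 = 1 then .odd else .evenPos

/-- Names of the six vertical edge configurations. -/
inductive VCName : Type
  | onepass : VCName
  | top : VCName
  | bottom : VCName
  | gap : VCName
  | twopass : VCName
  | none : VCName
deriving DecidableEq

/-- Names of the five horizontal edge configurations. -/
inductive HCName : Type
  | h11 : HCName
  | h20 : HCName
  | h02 : HCName
  | h22 : HCName
  | h00 : HCName
deriving DecidableEq

/-- Number of copies of the back cross-aisle edge `a_j a_{j+1}` in a horizontal configuration. -/
def hcA : HCName → ℕ
  | .h11 => 1
  | .h20 => 2
  | .h02 => 0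
  | .h22 => 2
  | .h00 => 0

/-- Number of copies of the front cross-aisle edge `b_j b_{j+1}` in a horizontal configuration. -/
def hcB : HCName → ℕ
  | .h11 => 1
  | .h20 => 0
  | .h02 => 2
  | .h22 => 2
  | .h00 => 0

/-- The seven equivalence classes, as triples (parity of `a_j`, parity of `b_j`, #components). -/
def cUU1C : DegClass × DegClass × ℕ := (.odd, .odd, 1)
def c0E1C : DegClass × DegClass × ℕ := (.zero, .evenPos, 1)
def cE01C : DegClass × DegClass × ℕ := (.evenPos, .zero, 1)
def cEE1C : DegClass × DegClass × ℕ := (.evenPos, .evenPos, 1)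
def cEE2C : DegClass × DegClass × ℕ := (.evenPos, .evenPos, 2)
def c000C : DegClass × DegClass × ℕ := (.zero, .zero, 0)
def c001C : DegClass × DegClass × ℕ := (.zero, .zero, 1)

/-- A single-block parallel-aisle warehouse in the sense of Ratliff and Rosenthal:
`n ≥ 1` vertical pick aisles, two horizontal cross-aisles, `picks j` pick vertices
strictly inside aisle `j`, nonnegative edge lengths, and a depot located at some
cross-aisle vertex `a_j` (if `depotTop`) or `b_j`. -/
structure Warehouse where
  n : ℕ
  npos : 1 ≤ n
  picks : Fin n → ℕ
  vlen : (j : Fin n) → Fin (picks j + 1) → ℝ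
  hlenA : Fin (n - 1) → ℝ
  hlenB : Fin (n - 1) → ℝ
  vlen_nonneg : ∀ j i, 0 ≤ vlen j i
  hlenA_nonneg : ∀ k, 0 ≤ hlenA k
  hlenB_nonneg : ∀ k, 0 ≤ hlenB k
  depotAisle : Fin n
  depotTop : Bool

namespace Warehouse

variable (W : Warehouse)

/-- Vertices of the warehouse graph: in aisle `j`, position `0` is the back cross-aisle
vertex `a_j`, position `picks j + 1` is the front cross-aisle vertex `b_j`, and
positions `1, …, picks j` are the pick vertices of aisle `j`. -/
def V : Type := Σ j : Fin W.n, Fin (W.picks j + 2)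

instance : DecidableEq W.V :=
  inferInstanceAs (DecidableEq (Σ j : Fin W.n, Fin (W.picks j + 2)))

instance : Fintype W.V :=
  inferInstanceAs (Fintype (Σ j : Fin W.n, Fin (W.picks j + 2)))

/-- The back cross-aisle vertex `a_j`. -/
def aV (j : Fin W.n) : W.V := ⟨j, 0⟩

/-- The front cross-aisle vertex `b_j`. -/
def bV (j : Fin W.n) : W.V := ⟨j, Fin.last (W.picks j + 1)⟩

/-- The depot vertex `v₀`. -/
def depot : W.V := if W.depotTop then W.aV W.depotAisle else W.bV W.depotAisle

/-- `v` is a pick vertex, i.e. a vertex strictly inside an aisle. -/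
def IsPick (v : W.V) : Prop := 0 < v.2.val ∧ v.2.val < W.picks v.1 + 1

/-- `v` is a required vertex, i.e. a member of `P` (a pick vertex or the depot). -/
def Required (v : W.V) : Prop := W.IsPick v ∨ v = W.depot

/-- Edges of the warehouse graph: a vertical edge `⟨j, i⟩` joins positions `i` and
`i+1` of aisle `j`; horizontal edges `inr (inl k)` join `a_k a_{k+1}` and
`inr (inr k)` join `b_k b_{k+1}`. -/
def E : Type := (Σ j : Fin W.n, Fin (W.picks j + 1)) ⊕ (Fin (W.n - 1) ⊕ Fin (W.n - 1))

instance : DecidableEq W.E :=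
  inferInstanceAs (DecidableEq ((Σ j : Fin W.n, Fin (W.picks j + 1)) ⊕ (Fin (W.n - 1) ⊕ Fin (W.n - 1))))

instance : Fintype W.E :=
  inferInstanceAs (Fintype ((Σ j : Fin W.n, Fin (W.picks j + 1)) ⊕ (Fin (W.n - 1) ⊕ Fin (W.n - 1))))

/-- The left aisle of a horizontal edge index. -/
def leftAisle (k : Fin (W.n - 1)) : Fin W.n := ⟨k.val, by have := k.isLt; omega⟩

/-- The right aisle of a horizontal edge index. -/
def rightAisle (k : Fin (W.n - 1)) : Fin W.n := ⟨k.val + 1, by have := k.isLt; omega⟩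

/-- Endpoints of an edge. -/
def ends : W.E → W.V × W.V
  | .inl ⟨j, i⟩ => (⟨j, i.castSucc⟩, ⟨j, i.succ⟩)
  | .inr (.inl k) => (W.aV (W.leftAisle k), W.aV (W.rightAisle k))
  | .inr (.inr k) => (W.bV (W.leftAisle k), W.bV (W.rightAisle k))

/-- Length of an edge. -/
def elen : W.E → ℝ
  | .inl ⟨j, i⟩ => W.vlen j i
  | .inr (.inl k) => W.hlenA k
  | .inr (.inr k) => W.hlenB k

/-- A subgraph of `G` is a multiplicity function taking each edge with multiplicity at most 2. -/
def IsSub (T : W.E → ℕ) : Prop := ∀ e, T e ≤ 2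

/-- Degree of a vertex in a subgraph, counting edges with multiplicity. -/
def deg (T : W.E → ℕ) (v : W.V) : ℕ :=
  ∑ e : W.E, T e * ((if (W.ends e).1 = v then 1 else 0) + (if (W.ends e).2 = v then 1 else 0))

/-- Total length of a subgraph, counting edges with multiplicity. -/
def length (T : W.E → ℕ) : ℝ := ∑ e : W.E, (T e : ℝ) * W.elen e

/-- Source of a directed traversal step. -/
def stepSrc (s : W.E × Bool) : W.V := if s.2 then (W.ends s.1).1 else (W.ends s.1).2

/-- Destination of a directed traversal step. -/
def stepDst (s : W.E × Bool) : W.V := if s.2 then (W.ends s.1).2 else (W.ends s.1).1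

/-- A list of directed steps is a closed walk. -/
def IsClosedWalk (l : List (W.E × Bool)) : Prop :=
  l.Chain' (fun s t => W.stepDst s = W.stepSrc t) ∧
  ∀ s ∈ l.head?, ∀ t ∈ l.getLast?, W.stepDst t = W.stepSrc s

/-- `T` is a tour subgraph: every required vertex has positive degree and there is a
closed walk traversing every edge of `T`, counted with multiplicity, exactly once. -/
def IsTour (T : W.E → ℕ) : Prop :=
  W.IsSub T ∧ (∀ v, W.Required v → 0 < W.deg T v) ∧
  ∃ l : List (W.E × Bool), W.IsClosedWalk l ∧ ∀ e : W.E, (l.map Prod.fst).count e = T e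

/-- `T` is an `L` partial tour subgraph: `T` is a subgraph supported on `L` and there is a
subgraph `C` of `G − L` such that `T ∪ C` is a tour subgraph of `G`. -/
def IsPTS (L : Set W.E) (T : W.E → ℕ) : Prop :=
  W.IsSub T ∧ (∀ e ∉ L, T e = 0) ∧
  ∃ C : W.E → ℕ, W.IsSub C ∧ (∀ e ∈ L, C e = 0) ∧ W.IsTour (fun e => T e + C e)

/-- Two `L` PTSs are equivalent: any completion of one is a completion of the other. -/
def EquivPTS (L : Set W.E) (T₁ T₂ : W.E → ℕ) : Prop :=
  ∀ C : W.E → ℕ, W.IsSub C → (∀ e ∈ L, C e = 0) →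
    (W.IsTour (fun e => T₁ e + C e) ↔ W.IsTour (fun e => T₂ e + C e))

/-- The edge set containing the vertical edges of the (0-indexed) aisles `< vmax` and the
horizontal edges with (0-indexed) index `< hmax`.  Thus, in paper (1-indexed) notation,
`L_j = edgesUpTo j (j-1)`, `L_j^- = edgesUpTo (j-1) (j-1)` and `G = edgesUpTo n (n-1)`. -/
def edgesUpTo (vmax hmax : ℕ) : Set W.E := fun e =>
  match e with
  | .inl ⟨i, _⟩ => i.val < vmax
  | .inr (.inl k) => k.val < hmax
  | .inr (.inr k) => k.val < hmax

/-- The simple graph on the vertices of `G` induced by the edges of positive multiplicity. -/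
def sgraph (T : W.E → ℕ) : SimpleGraph W.V where
  Adj v w := v ≠ w ∧ ∃ e, 0 < T e ∧
    (((W.ends e).1 = v ∧ (W.ends e).2 = w) ∨ ((W.ends e).1 = w ∧ (W.ends e).2 = v))
  symm := by
    constructor
    intro v w hvw
    obtain ⟨hne, e, he, hor⟩ := hvw
    exact ⟨hne.symm, e, he, hor.symm⟩
  loopless := by constructor; intro v h; exact h.1 rfl

/-- Number of connected components of a subgraph after deleting all vertices of degree zero. -/
noncomputable def numComp (T : W.E → ℕ) : ℕ :=
  Nat.card ((W.sgraph T).induce {v : W.V | 0 < W.deg T v}).ConnectedComponent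

/-- `v` and `w` both have positive degree but lie in different connected components of `T`. -/
def SepComp (T : W.E → ℕ) (v w : W.V) : Prop :=
  0 < W.deg T v ∧ 0 < W.deg T w ∧ ¬ (W.sgraph T).Reachable v w

/-- The equivalence class of a subgraph relative to the cross-aisle vertices of aisle `j`:
the degree parities of `a_j` and `b_j` and the number of nonempty connected components. -/
noncomputable def classOf (T : W.E → ℕ) (j : Fin W.n) : DegClass × DegClass × ℕ :=
  (degClass (W.deg T (W.aV j)), degClass (W.deg T (W.bV j)), W.numComp T)

theorem exists_gapIdx (j : Fin W.n) :
    ∃ g : Fin (W.picks j + 1), ∀ i, W.vlen j i ≤ W.vlen j g := by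
  obtain ⟨g, -, hg⟩ :=
    Finset.exists_max_image (Finset.univ : Finset (Fin (W.picks j + 1))) (W.vlen j)
      ⟨0, Finset.mem_univ 0⟩
  exact ⟨g, fun i => hg i (Finset.mem_univ i)⟩

/-- The vertical edge of aisle `j` of maximum length: the edge omitted by the `gap`
configuration (which leaves the largest section of the aisle unconnected). -/
noncomputable def gapIdx (j : Fin W.n) : Fin (W.picks j + 1) := (W.exists_gapIdx j).choose

theorem gapIdx_spec (j : Fin W.n) : ∀ i, W.vlen j i ≤ W.vlen j (W.gapIdx j) :=
  (W.exists_gapIdx j).choose_spec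

/-- The multiplicity of the `i`-th vertical edge of aisle `j` in each of the six vertical
edge configurations. -/
noncomputable def vconfFun (j : Fin W.n) (c : VCName) (i : Fin (W.picks j + 1)) : ℕ :=
  match c with
  | .onepass => 1
  | .top => if i.val < W.picks j then 2 else 0
  | .bottom => if 1 ≤ i.val then 2 else 0
  | .gap => if i = W.gapIdx j then 0 else 2
  | .twopass => 2
  | .none => 0

/-- A vertical edge configuration in aisle `j`, as a subgraph of `G`. -/
noncomputable def vcSub (j : Fin W.n) (c : VCName) : W.E → ℕ := fun e =>
  match e with
  | .inl ⟨i, x⟩ =>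
      if h : i = j then W.vconfFun j c ⟨x.val, by exact h ▸ x.isLt⟩ else 0
  | .inr _ => 0

/-- A horizontal edge configuration between aisles `k` and `k+1`, as a subgraph of `G`. -/
def hcSub (k : Fin (W.n - 1)) (c : HCName) : W.E → ℕ := fun e =>
  match e with
  | .inl _ => 0
  | .inr (.inl k') => if k' = k then hcA c else 0
  | .inr (.inr k') => if k' = k then hcB c else 0

end Warehouse


namespace Warehouse

variable (W : Warehouse)

/-- aisle index of a vertex, as a natural number -/
def vfst (v : W.V) : ℕ := v.1.val

/-- position of a vertex within its aisle, as a natural number -/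
def vsnd (v : W.V) : ℕ := v.2.val

lemma ends_ne (e : W.E) : (W.ends e).1 ≠ (W.ends e).2 := by
  rcases e with ⟨j, i⟩ | (k | k)
  · intro h
    have := congrArg W.vsnd h
    simp only [ends, vsnd, Fin.coe_castSucc, Fin.val_succ] at this
    omega
  · intro h
    have := congrArg W.vfst h
    simp only [ends, vfst, aV, leftAisle, rightAisle] at this
    omega
  · intro h
    have := congrArg W.vfst h
    simp only [ends, vfst, bV, leftAisle, rightAisle] at this
    omega

lemma deg_pos_of_endpoint {T : W.E → ℕ} {e : W.E} {v : W.V} (he : 0 < T e)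
    (hv : (W.ends e).1 = v ∨ (W.ends e).2 = v) : 0 < W.deg T v := by
  have hle : T e * ((if (W.ends e).1 = v then 1 else 0) + (if (W.ends e).2 = v then 1 else 0))
      ≤ W.deg T v :=
    Finset.single_le_sum
      (f := fun e => T e * ((if (W.ends e).1 = v then 1 else 0) + (if (W.ends e).2 = v then 1 else 0)))
      (fun i _ => Nat.zero_le _) (Finset.mem_univ e)
  refine lt_of_lt_of_le ?_ hle
  rcases hv with hv | hv <;> simp only [hv, if_pos rfl] <;> split_ifs <;> omega

lemma deg_eq_zero_of {T : W.E → ℕ} {v : W.V}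
    (h : ∀ e, 0 < T e → (W.ends e).1 ≠ v ∧ (W.ends e).2 ≠ v) : W.deg T v = 0 := by
  refine Finset.sum_eq_zero fun e _ => ?_
  rcases Nat.eq_zero_or_pos (T e) with h0 | h0
  · simp [h0]
  · obtain ⟨h1, h2⟩ := h e h0
    simp [h1, h2]

lemma deg_pos_elim {T : W.E → ℕ} {v : W.V} (h : 0 < W.deg T v) :
    ∃ e, 0 < T e ∧ ((W.ends e).1 = v ∨ (W.ends e).2 = v) := by
  by_contra hc
  push_neg at hc
  have : W.deg T v = 0 := W.deg_eq_zero_of fun e he => hc e he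
  omega

lemma deg_add (T C : W.E → ℕ) (v : W.V) :
    W.deg (fun e => T e + C e) v = W.deg T v + W.deg C v := by
  unfold deg
  rw [← Finset.sum_add_distrib]
  exact Finset.sum_congr rfl fun e _ => by ring

lemma sgraph_adj_deg_pos {T : W.E → ℕ} {v w : W.V} (h : (W.sgraph T).Adj v w) :
    0 < W.deg T v := by
  obtain ⟨-, e, he, hor⟩ := h
  exact W.deg_pos_of_endpoint he (by tauto)

lemma reach_deg_pos {T : W.E → ℕ} {v w : W.V} (h : (W.sgraph T).Reachable v w)
    (hne : v ≠ w) : 0 < W.deg T w := by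
  obtain ⟨p⟩ := h.symm
  cases p with
  | nil => exact absurd rfl hne.symm
  | cons h q => exact W.sgraph_adj_deg_pos h

end Warehouse

namespace Warehouse

variable (W : Warehouse)

lemma end_mem_L {j : Fin W.n} {e : W.E} (he : e ∈ W.edgesUpTo (j.val + 1) j.val) :
    W.vfst (W.ends e).1 ≤ j.val ∧ W.vfst (W.ends e).2 ≤ j.val := by
  rcases e with ⟨i, x⟩ | (k | k) <;>
    simp only [edgesUpTo, Membership.mem, Set.Mem] at he <;>
    simp only [ends, vfst, aV, bV, leftAisle, rightAisle] <;> omega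

lemma end_not_mem_L {j : Fin W.n} {e : W.E} (he : e ∉ W.edgesUpTo (j.val + 1) j.val)
    {v : W.V} (hv : (W.ends e).1 = v ∨ (W.ends e).2 = v) :
    j.val < W.vfst v ∨ v = W.aV j ∨ v = W.bV j := by
  rcases e with ⟨i, x⟩ | (k | k) <;>
      simp only [edgesUpTo, Membership.mem, Set.Mem, not_lt] at he
  · left
    rcases hv with hv | hv <;> rw [← hv] <;> simp only [ends, vfst] <;> omega
  · rcases hv with hv | hv
    · rcases Nat.lt_or_ge j.val k.val with hlt | hge
      · left; rw [← hv]; simpa [ends, vfst, leftAisle, aV] using hlt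
      · right; left
        rw [← hv]
        have hlj : W.leftAisle k = j := Fin.ext (le_antisymm hge he)
        simp only [ends]
        rw [hlj]
    · left; rw [← hv]; simp only [ends, vfst, aV, rightAisle]; omega
  · rcases hv with hv | hv
    · rcases Nat.lt_or_ge j.val k.val with hlt | hge
      · left; rw [← hv]; simpa [ends, vfst, leftAisle, bV] using hlt
      · right; right
        rw [← hv]
        have hlj : W.leftAisle k = j := Fin.ext (le_antisymm hge he)
        simp only [ends]
        rw [hlj]
    · left; rw [← hv]; simp only [ends, vfst, bV, rightAisle]; omega

lemma aV_ne_bV (j : Fin W.n) : W.aV j ≠ W.bV j := by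
  intro h
  have := congrArg W.vsnd h
  simp [vsnd, aV, bV, Fin.last] at this

/-- handshake: the total degree is even -/
lemma sum_deg_even (T : W.E → ℕ) : ∑ v : W.V, W.deg T v = ∑ e : W.E, 2 * T e := by
  unfold deg
  rw [Finset.sum_comm]
  refine Finset.sum_congr rfl fun e _ => ?_
  rw [← Finset.mul_sum, Finset.sum_add_distrib]
  rw [Finset.sum_ite_eq Finset.univ (W.ends e).1 (fun _ => 1),
    Finset.sum_ite_eq Finset.univ (W.ends e).2 (fun _ => 1)]
  simp [mul_comm]

/-- the sum of degrees over an edge-closed set of vertices is even -/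
lemma sum_deg_closed_even (T : W.E → ℕ) (S : Finset W.V)
    (hS : ∀ e, 0 < T e → ((W.ends e).1 ∈ S ↔ (W.ends e).2 ∈ S)) :
    Even (∑ v ∈ S, W.deg T v) := by
  unfold deg
  rw [Finset.sum_comm]
  refine Finset.sum_induction _ Even (fun a b => Even.add) Even.zero fun e _ => ?_
  rw [← Finset.mul_sum, Finset.sum_add_distrib]
  rw [Finset.sum_ite_eq S (W.ends e).1 (fun _ => 1),
    Finset.sum_ite_eq S (W.ends e).2 (fun _ => 1)]
  rcases Nat.eq_zero_or_pos (T e) with h0 | h0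
  · simp [h0]
  · have := hS e h0
    by_cases h1 : (W.ends e).1 ∈ S
    · have h2 : (W.ends e).2 ∈ S := this.mp h1
      simp only [h1, h2, if_pos]
      exact ⟨T e, by ring⟩
    · have h2 : (W.ends e).2 ∉ S := fun h => h1 (this.mpr h)
      simp [h1, h2]

end Warehouse

namespace Warehouse

variable (W : Warehouse)

lemma map_dst_chain : ∀ (t : List (W.E × Bool)) (a : W.E × Bool),
    (a :: t).Chain' (fun s u => W.stepDst s = W.stepSrc u) →
    (a :: t).map W.stepDst = t.map W.stepSrc ++ [W.stepDst ((a :: t).getLastD a)]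
  | [], a, _ => by simp
  | b :: t', a, h => by
    have h1 : W.stepDst a = W.stepSrc b := (List.isChain_cons_cons.mp h).1
    obtain ⟨x, hx⟩ := Option.isSome_iff_exists.mp
      (List.getLast?_isSome.mpr (by simp : (b :: t') ≠ []))
    have hgd : ∀ d : W.E × Bool, (b :: t').getLastD d = x := fun d => by
      rw [List.getLastD_eq_getLast?, hx]; rfl
    have ih := map_dst_chain t' b (List.isChain_cons_cons.mp h).2
    rw [hgd] at ih
    show W.stepDst a :: List.map W.stepDst (b :: t')
        = List.map W.stepSrc (b :: t') ++ [W.stepDst ((a :: b :: t').getLastD a)]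
    rw [List.getLastD_cons, hgd, ih, h1]
    simp

lemma count_src_dst {l : List (W.E × Bool)} (hl : W.IsClosedWalk l) (v : W.V) :
    (l.map W.stepDst).count v = (l.map W.stepSrc).count v := by
  obtain ⟨hchain, hwrap⟩ := hl
  cases l with
  | nil => rfl
  | cons a t =>
    have hmap := W.map_dst_chain t a hchain
    have hne : (a :: t) ≠ [] := by simp
    have hlast : (a :: t).getLast? = some ((a :: t).getLastD a) := by
      obtain ⟨x, hx⟩ := Option.isSome_iff_exists.mp (List.getLast?_isSome.mpr hne)
      rw [List.getLastD_eq_getLast?, hx]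
      simp
    have hw : W.stepDst ((a :: t).getLastD a) = W.stepSrc a :=
      hwrap a (by simp) _ (Option.mem_def.mpr hlast)
    rw [hmap, hw, List.count_append]
    simp only [List.map_cons, List.count_cons, List.count_singleton', beq_iff_eq]
    by_cases h : W.stepSrc a = v
    · simp [h]
    · have h'' : ¬ v = W.stepSrc a := fun hv => h hv.symm
      simp [h, h'']

lemma sum_count_mul (f : W.E → ℕ) : ∀ (L : List W.E),
    ∑ e : W.E, (L.count e) * f e = (L.map f).sum
  | [] => by simp
  | x :: L' => by
    have ih := sum_count_mul f L'
    have hc : ∀ e : W.E, (x :: L').count e * f e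
        = L'.count e * f e + (if e = x then f e else 0) := by
      intro e
      by_cases h : e = x <;>
        simp [List.count_cons, h, add_mul, one_mul, beq_iff_eq, eq_comm (a := x)]
    rw [Finset.sum_congr rfl fun e _ => hc e, Finset.sum_add_distrib, ih,
      Finset.sum_ite_eq' Finset.univ x f]
    simp [List.map_cons, Nat.add_comm]

lemma count_map_eq_sum (v : W.V) (g : W.E × Bool → W.V) : ∀ l : List (W.E × Bool),
    (l.map g).count v = (l.map (fun s => if g s = v then 1 else 0)).sum
  | [] => rfl
  | s :: l' => by
    have ih := count_map_eq_sum v g l'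
    simp only [List.map_cons, List.count_cons, List.sum_cons, ih]
    by_cases h : g s = v
    · simp [h, Nat.add_comm]
    · have h' : ¬ v = g s := fun hv => h hv.symm
      simp [h, h']

lemma list_sum_split (f g : W.E × Bool → ℕ) : ∀ l : List (W.E × Bool),
    (l.map (fun s => f s + g s)).sum = (l.map f).sum + (l.map g).sum
  | [] => rfl
  | s :: l' => by
    have ih := list_sum_split f g l'
    simp only [List.map_cons, List.sum_cons, ih]
    ring

lemma deg_eq_counts (H : W.E → ℕ) (l : List (W.E × Bool))
    (hcount : ∀ e, (l.map Prod.fst).count e = H e) (v : W.V) :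
    W.deg H v = (l.map W.stepSrc).count v + (l.map W.stepDst).count v := by
  unfold deg
  have step1 : ∑ e : W.E, H e * ((if (W.ends e).1 = v then 1 else 0) + (if (W.ends e).2 = v then 1 else 0))
      = ((l.map Prod.fst).map (fun e => (if (W.ends e).1 = v then 1 else 0) + (if (W.ends e).2 = v then 1 else 0))).sum := by
    rw [← W.sum_count_mul]
    exact Finset.sum_congr rfl fun e _ => by rw [hcount e]
  rw [step1, List.map_map]
  have step2 : ((fun e => (if (W.ends e).1 = v then 1 else 0) + (if (W.ends e).2 = v then 1 else 0)) ∘ Prod.fst : W.E × Bool → ℕ)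
      = fun s => (if W.stepSrc s = v then 1 else 0) + (if W.stepDst s = v then 1 else 0) := by
    funext s
    rcases s with ⟨e, b⟩
    cases b <;> simp [stepSrc, stepDst] <;> ring
  rw [step2, W.list_sum_split, ← W.count_map_eq_sum, ← W.count_map_eq_sum]

lemma deg_even_of_tour (H : W.E → ℕ) (l : List (W.E × Bool)) (hl : W.IsClosedWalk l)
    (hcount : ∀ e, (l.map Prod.fst).count e = H e) (v : W.V) : Even (W.deg H v) := by
  rw [W.deg_eq_counts H l hcount v, ← W.count_src_dst hl v]
  exact ⟨_, rfl⟩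

lemma step_adj {H : W.E → ℕ} {l : List (W.E × Bool)}
    (hcount : ∀ e, (l.map Prod.fst).count e = H e) {s : W.E × Bool} (hs : s ∈ l) :
    (W.sgraph H).Adj (W.stepSrc s) (W.stepDst s) := by
  rcases s with ⟨e, b⟩
  have he : 0 < H e := by
    rw [← hcount e]
    exact List.count_pos_iff.mpr (List.mem_map_of_mem (f := Prod.fst) hs)
  cases b
  · exact ⟨(W.ends_ne e).symm, e, he, Or.inr ⟨rfl, rfl⟩⟩
  · exact ⟨W.ends_ne e, e, he, Or.inl ⟨rfl, rfl⟩⟩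

lemma chain_reach {G : SimpleGraph W.V} : ∀ (l : List (W.E × Bool)),
    l.Chain' (fun s u => W.stepDst s = W.stepSrc u) →
    (∀ s ∈ l, G.Adj (W.stepSrc s) (W.stepDst s)) →
    ∀ a ∈ l.head?, ∀ s ∈ l, G.Reachable (W.stepSrc a) (W.stepSrc s)
  | [], _, _ => by simp
  | b :: t, hchain, hadj => by
    intro a ha s hs
    simp only [List.head?_cons, Option.mem_def, Option.some.injEq] at ha
    subst ha
    rcases List.mem_cons.mp hs with rfl | hs'
    · exact SimpleGraph.Reachable.refl _
    · cases t with
      | nil => simp at hs'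
      | cons c t' =>
        have h1 : W.stepDst b = W.stepSrc c := (List.isChain_cons_cons.mp hchain).1
        have hreach1 : G.Reachable (W.stepSrc b) (W.stepSrc c) := by
          have := (hadj b (by simp)).reachable
          rwa [h1] at this
        have ih := chain_reach (c :: t') (List.isChain_cons_cons.mp hchain).2
          (fun s hs => hadj s (List.mem_cons_of_mem _ hs)) c (by simp) s hs'
        exact hreach1.trans ih

lemma euler_reach {H : W.E → ℕ} {l : List (W.E × Bool)} (hl : W.IsClosedWalk l)
    (hcount : ∀ e, (l.map Prod.fst).count e = H e) {v w : W.V}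
    (hv : 0 < W.deg H v) (hw : 0 < W.deg H w) : (W.sgraph H).Reachable v w := by
  obtain ⟨hchain, hwrap⟩ := hl
  have key : ∀ u, 0 < W.deg H u → ∀ a ∈ l.head?, (W.sgraph H).Reachable (W.stepSrc a) u := by
    intro u hu a ha
    obtain ⟨e, he, hor⟩ := W.deg_pos_elim hu
    have hmem : e ∈ l.map Prod.fst := by
      rw [← List.count_pos_iff, hcount e]; exact he
    obtain ⟨s, hs, hse⟩ := List.mem_map.mp hmem
    have hadj := W.step_adj hcount hs
    have h1 : (W.sgraph H).Reachable (W.stepSrc a) (W.stepSrc s) :=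
      W.chain_reach l hchain (fun s hs => W.step_adj hcount hs) a ha s hs
    have hsd : W.stepSrc s = u ∨ W.stepDst s = u := by
      rcases s with ⟨e', b⟩
      cases hse
      cases b <;> simp only [stepSrc, stepDst] <;> tauto
    rcases hsd with h2 | h2
    · exact h2 ▸ h1
    · exact h1.trans (h2 ▸ hadj.reachable)
  cases l with
  | nil =>
    exfalso
    obtain ⟨e, he, -⟩ := W.deg_pos_elim hv
    have := hcount e
    simp only [List.map_nil, List.count_nil] at this
    omega
  | cons a t =>
    exact ((key v hv a rfl).symm.trans (key w hw a rfl))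

end Warehouse

namespace Warehouse

variable (W : Warehouse)

lemma walk_induce {T : W.E → ℕ} : ∀ {v w : W.V}, (W.sgraph T).Walk v w →
    ∀ (hv : 0 < W.deg T v) (hw : 0 < W.deg T w),
    ((W.sgraph T).induce {u : W.V | 0 < W.deg T u}).Reachable ⟨v, hv⟩ ⟨w, hw⟩
  | _, _, SimpleGraph.Walk.nil, _, _ => SimpleGraph.Reachable.refl _
  | v, w, SimpleGraph.Walk.cons h q, hv, hw => by
    have hx : 0 < W.deg T _ := W.sgraph_adj_deg_pos h.symm
    have hadj : ((W.sgraph T).induce {u : W.V | 0 < W.deg T u}).Adj ⟨v, hv⟩ ⟨_, hx⟩ := h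
    exact hadj.reachable.trans (walk_induce q hx hw)

lemma reach_induce {T : W.E → ℕ} {v w : W.V} (h : (W.sgraph T).Reachable v w)
    (hv : 0 < W.deg T v) (hw : 0 < W.deg T w) :
    ((W.sgraph T).induce {u : W.V | 0 < W.deg T u}).Reachable ⟨v, hv⟩ ⟨w, hw⟩ := by
  obtain ⟨p⟩ := h
  exact W.walk_induce p hv hw

lemma numComp_eq_zero {T : W.E → ℕ} (h : ∀ v : W.V, W.deg T v = 0) : W.numComp T = 0 := by
  haveI h1 : IsEmpty {v : W.V | 0 < W.deg T v} :=
    ⟨fun ⟨v, hv⟩ => by rw [Set.mem_setOf_eq, h v] at hv; exact Nat.lt_irrefl 0 hv⟩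
  haveI : IsEmpty ((W.sgraph T).induce {v : W.V | 0 < W.deg T v}).ConnectedComponent :=
    ⟨fun c => SimpleGraph.ConnectedComponent.ind (fun v => isEmptyElim v) c⟩
  exact Nat.card_of_isEmpty

lemma numComp_eq_one {T : W.E → ℕ} {v0 : W.V} (h0 : 0 < W.deg T v0)
    (h : ∀ (v : W.V) (hv : 0 < W.deg T v),
      ((W.sgraph T).induce {u : W.V | 0 < W.deg T u}).Reachable ⟨v, hv⟩ ⟨v0, h0⟩) :
    W.numComp T = 1 := by
  refine Nat.card_eq_one_iff_unique.mpr ⟨⟨fun c d => ?_⟩,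
    ⟨SimpleGraph.connectedComponentMk _ ⟨v0, h0⟩⟩⟩
  refine SimpleGraph.ConnectedComponent.ind₂ (fun x y => ?_) c d
  obtain ⟨vx, hvx⟩ := x
  obtain ⟨vy, hvy⟩ := y
  exact SimpleGraph.ConnectedComponent.sound ((h vx hvx).trans (h vy hvy).symm)

lemma numComp_finite (T : W.E → ℕ) :
    Finite ((W.sgraph T).induce {v : W.V | 0 < W.deg T v}).ConnectedComponent :=
  Finite.of_surjective
    (SimpleGraph.connectedComponentMk ((W.sgraph T).induce {v : W.V | 0 < W.deg T v}))
    (fun c => SimpleGraph.ConnectedComponent.ind (fun v => ⟨v, rfl⟩) c)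

lemma numComp_pos {T : W.E → ℕ} {v0 : W.V} (h0 : 0 < W.deg T v0) : 0 < W.numComp T := by
  haveI := W.numComp_finite T
  haveI : Nonempty ((W.sgraph T).induce {v : W.V | 0 < W.deg T v}).ConnectedComponent :=
    ⟨SimpleGraph.connectedComponentMk _ ⟨v0, h0⟩⟩
  exact Nat.card_pos

lemma numComp_le_two {T : W.E → ℕ} {va vb : W.V}
    (ha : 0 < W.deg T va) (hb : 0 < W.deg T vb)
    (h : ∀ (v : W.V) (hv : 0 < W.deg T v),
      ((W.sgraph T).induce {u : W.V | 0 < W.deg T u}).Reachable ⟨v, hv⟩ ⟨va, ha⟩ ∨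
      ((W.sgraph T).induce {u : W.V | 0 < W.deg T u}).Reachable ⟨v, hv⟩ ⟨vb, hb⟩) :
    W.numComp T ≤ 2 := by
  haveI := W.numComp_finite T
  have hall : ∀ c : ((W.sgraph T).induce {v : W.V | 0 < W.deg T v}).ConnectedComponent,
      c = SimpleGraph.connectedComponentMk _ ⟨va, ha⟩ ∨
      c = SimpleGraph.connectedComponentMk _ ⟨vb, hb⟩ := by
    refine fun c => SimpleGraph.ConnectedComponent.ind (fun u => ?_) c
    obtain ⟨v, hv⟩ := u
    exact (h v hv).imp SimpleGraph.ConnectedComponent.sound SimpleGraph.ConnectedComponent.sound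
  calc W.numComp T
      = (Set.univ : Set ((W.sgraph T).induce {v : W.V | 0 < W.deg T v}).ConnectedComponent).ncard := by
        rw [Set.ncard_univ]; rfl
    _ ≤ ({SimpleGraph.connectedComponentMk _ ⟨va, ha⟩,
          SimpleGraph.connectedComponentMk _ ⟨vb, hb⟩} : Set _).ncard :=
        Set.ncard_le_ncard
          (fun c _ => by
            rcases hall c with h | h <;> simp [h])
          (Set.toFinite _)
    _ ≤ 2 := le_trans (Set.ncard_insert_le _ _) (by simp)

lemma degT_far {j : Fin W.n} {T : W.E → ℕ}
    (hTsupp : ∀ e ∉ W.edgesUpTo (j.val + 1) j.val, T e = 0)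
    {w : W.V} (hw : j.val < W.vfst w) : W.deg T w = 0 := by
  refine W.deg_eq_zero_of fun e he => ?_
  have hL : e ∈ W.edgesUpTo (j.val + 1) j.val := by
    by_contra hc
    rw [hTsupp e hc] at he
    exact Nat.lt_irrefl 0 he
  have hmem := W.end_mem_L hL
  constructor <;> intro h <;> rw [h] at hmem <;> omega

lemma degC_interior {j : Fin W.n} {C : W.E → ℕ}
    (hCsupp : ∀ e ∈ W.edgesUpTo (j.val + 1) j.val, C e = 0)
    {w : W.V} (hw1 : W.vfst w ≤ j.val) (hw2 : w ≠ W.aV j) (hw3 : w ≠ W.bV j) :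
    W.deg C w = 0 := by
  refine W.deg_eq_zero_of fun e he => ?_
  have hnotL : e ∉ W.edgesUpTo (j.val + 1) j.val := fun hL => by
    rw [hCsupp e hL] at he; exact Nat.lt_irrefl 0 he
  constructor <;> intro h
  · rcases W.end_not_mem_L hnotL (Or.inl h) with hfar | hab
    · omega
    · rcases hab with h1 | h1
      · exact hw2 h1
      · exact hw3 h1
  · rcases W.end_not_mem_L hnotL (Or.inr h) with hfar | hab
    · omega
    · rcases hab with h1 | h1
      · exact hw2 h1
      · exact hw3 h1

lemma interior_even {j : Fin W.n} {T C : W.E → ℕ}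
    (hTsupp : ∀ e ∉ W.edgesUpTo (j.val + 1) j.val, T e = 0)
    (hCsupp : ∀ e ∈ W.edgesUpTo (j.val + 1) j.val, C e = 0)
    {l : List (W.E × Bool)} (hl : W.IsClosedWalk l)
    (hcount : ∀ e, (l.map Prod.fst).count e = T e + C e)
    {w : W.V} (hw1 : w ≠ W.aV j) (hw2 : w ≠ W.bV j) : Even (W.deg T w) := by
  rcases Nat.lt_or_ge j.val (W.vfst w) with hfar | hle
  · rw [W.degT_far hTsupp hfar]; exact Even.zero
  · have hC := W.degC_interior hCsupp hle hw1 hw2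
    have hH := W.deg_even_of_tour (fun e => T e + C e) l hl hcount w
    rw [W.deg_add, hC] at hH
    simpa using hH

lemma parity_ab {j : Fin W.n} {T C : W.E → ℕ}
    (hTsupp : ∀ e ∉ W.edgesUpTo (j.val + 1) j.val, T e = 0)
    (hCsupp : ∀ e ∈ W.edgesUpTo (j.val + 1) j.val, C e = 0)
    {l : List (W.E × Bool)} (hl : W.IsClosedWalk l)
    (hcount : ∀ e, (l.map Prod.fst).count e = T e + C e) :
    Even (W.deg T (W.aV j) + W.deg T (W.bV j)) := by
  have htot : Even (∑ v : W.V, W.deg T v) := by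
    rw [W.sum_deg_even]
    exact Finset.sum_induction _ Even (fun a b => Even.add) Even.zero
      fun e _ => even_two_mul (T e)
  have hsub : ({W.aV j, W.bV j} : Finset W.V) ⊆ Finset.univ := Finset.subset_univ _
  rw [← Finset.sum_sdiff hsub, Finset.sum_pair (W.aV_ne_bV j)] at htot
  have hrest : Even (∑ v ∈ Finset.univ \ {W.aV j, W.bV j}, W.deg T v) := by
    refine Finset.sum_induction _ Even (fun a b => Even.add) Even.zero fun v hv => ?_
    simp only [Finset.mem_sdiff, Finset.mem_insert, Finset.mem_singleton, not_or] at hv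
    exact W.interior_even hTsupp hCsupp hl hcount hv.2.1 hv.2.2
  exact (Nat.even_add.mp htot).mp hrest

lemma odd_reach {j : Fin W.n} {T C : W.E → ℕ}
    (hTsupp : ∀ e ∉ W.edgesUpTo (j.val + 1) j.val, T e = 0)
    (hCsupp : ∀ e ∈ W.edgesUpTo (j.val + 1) j.val, C e = 0)
    {l : List (W.E × Bool)} (hl : W.IsClosedWalk l)
    (hcount : ∀ e, (l.map Prod.fst).count e = T e + C e)
    (hodd : ¬ Even (W.deg T (W.aV j))) :
    (W.sgraph T).Reachable (W.aV j) (W.bV j) := by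
  classical
  by_contra hb
  set S : Finset W.V := Finset.univ.filter (fun w => (W.sgraph T).Reachable (W.aV j) w) with hS
  have haS : W.aV j ∈ S := by
    simp only [hS, Finset.mem_filter, Finset.mem_univ, true_and]
    exact SimpleGraph.Reachable.refl _
  have hbS : W.bV j ∉ S := by simp [hS, hb]
  have hclosed : ∀ e, 0 < T e → ((W.ends e).1 ∈ S ↔ (W.ends e).2 ∈ S) := by
    intro e he
    have hadj : (W.sgraph T).Adj (W.ends e).1 (W.ends e).2 :=
      ⟨W.ends_ne e, e, he, Or.inl ⟨rfl, rfl⟩⟩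
    simp only [hS, Finset.mem_filter, Finset.mem_univ, true_and]
    exact ⟨fun h => h.trans hadj.reachable, fun h => h.trans hadj.symm.reachable⟩
  have heven := W.sum_deg_closed_even T S hclosed
  rw [← Finset.add_sum_erase S _ haS] at heven
  have hrest : Even (∑ v ∈ S.erase (W.aV j), W.deg T v) := by
    refine Finset.sum_induction _ Even (fun a b => Even.add) Even.zero fun v hv => ?_
    have h1 := Finset.mem_erase.mp hv
    have hvb : v ≠ W.bV j := fun h => hbS (h ▸ h1.2)
    exact W.interior_even hTsupp hCsupp hl hcount h1.1 hvb
  exact hodd ((Nat.even_add.mp heven).mpr hrest)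

lemma sep_lemma {j : Fin W.n} {T C : W.E → ℕ}
    (hTsupp : ∀ e ∉ W.edgesUpTo (j.val + 1) j.val, T e = 0)
    (hCsupp : ∀ e ∈ W.edgesUpTo (j.val + 1) j.val, C e = 0)
    {l : List (W.E × Bool)} (hl : W.IsClosedWalk l)
    (hcount : ∀ e, (l.map Prod.fst).count e = T e + C e)
    {v : W.V} (hv : 0 < W.deg T v)
    (hra : ¬ (W.sgraph T).Reachable v (W.aV j))
    (hrb : ¬ (W.sgraph T).Reachable v (W.bV j)) :
    (∀ e, C e = 0) ∧
      ∀ w, 0 < W.deg (fun e => T e + C e) w → (W.sgraph T).Reachable v w := by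
  have step1 : ∀ w, (W.sgraph T).Reachable v w → 0 < W.deg T w := by
    intro w h
    rcases eq_or_ne v w with rfl | hne
    · exact hv
    · exact W.reach_deg_pos h hne
  have step2 : ∀ w, (W.sgraph T).Reachable v w → ∀ e, 0 < C e →
      ¬ ((W.ends e).1 = w ∨ (W.ends e).2 = w) := by
    intro w hw e he hor
    have hnotL : e ∉ W.edgesUpTo (j.val + 1) j.val := fun hL => by
      rw [hCsupp e hL] at he; exact Nat.lt_irrefl 0 he
    rcases W.end_not_mem_L hnotL hor with hfar | hab
    · have := W.degT_far hTsupp hfar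
      have := step1 w hw
      omega
    · rcases hab with rfl | rfl
      · exact hra hw
      · exact hrb hw
  have step3 : ∀ w, (W.sgraph (fun e => T e + C e)).Reachable v w →
      (W.sgraph T).Reachable v w := by
    suffices hsuf : ∀ x w, (W.sgraph (fun e => T e + C e)).Walk x w →
        (W.sgraph T).Reachable v x → (W.sgraph T).Reachable v w by
      intro w h
      obtain ⟨p⟩ := h
      exact hsuf v w p (SimpleGraph.Reachable.refl v)
    intro x w p
    induction p with
    | nil => exact id
    | @cons x y z h q ih =>
      intro hvx
      apply ih
      obtain ⟨hne, e, hepos, hor⟩ := h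
      rcases Nat.eq_zero_or_pos (T e) with h0 | h0
      · have hce : 0 < C e := by
          have hepos' : 0 < T e + C e := hepos
          omega
        exact absurd (by tauto : (W.ends e).1 = x ∨ (W.ends e).2 = x) (step2 x hvx e hce)
      · exact hvx.trans (SimpleGraph.Adj.reachable ⟨hne, e, h0, hor⟩)
  have hHv : 0 < W.deg (fun e => T e + C e) v := by
    rw [W.deg_add]; omega
  have step5 : ∀ w, 0 < W.deg (fun e => T e + C e) w → (W.sgraph T).Reachable v w :=
    fun w hw => step3 w (W.euler_reach hl hcount hHv hw)
  refine ⟨fun e => ?_, step5⟩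
  by_contra hc
  have hce : 0 < C e := Nat.pos_of_ne_zero hc
  have hHe : 0 < T e + C e := by omega
  have hw : 0 < W.deg (fun e => T e + C e) (W.ends e).1 :=
    W.deg_pos_of_endpoint (T := fun e => T e + C e) hHe (Or.inl rfl)
  exact step2 _ (step5 _ hw) e hce (Or.inl rfl)

lemma noreach {T : W.E → ℕ} {u x : W.V} (hx : W.deg T x = 0) (hu : 0 < W.deg T u) :
    ¬ (W.sgraph T).Reachable u x := by
  intro hr
  rcases eq_or_ne u x with rfl | hne
  · omega
  · have := W.reach_deg_pos hr hne
    omega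

lemma degClass_of_odd {d : ℕ} (h : d % 2 = 1) : degClass d = .odd := by
  unfold degClass
  rw [if_neg (by omega), if_pos h]

lemma degClass_of_evenPos {d : ℕ} (h1 : d ≠ 0) (h2 : d % 2 = 0) : degClass d = .evenPos := by
  unfold degClass
  rw [if_neg h1, if_neg (by omega)]

end Warehouse


set_option maxHeartbeats 1000000 in
/-- every `L_j` PTS belongs to one of the seven equivalence classes;
class `000C` occurs only if no pick vertex lies in `L_j`, and class `001C` occurs only
if no pick vertex lies in `G − L_j`. -/
theorem stmt2 (W : Warehouse) (j : Fin W.n)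
    (T : W.E → ℕ) (hT : W.IsPTS (W.edgesUpTo (j.val + 1) j.val) T) :
    W.classOf T j ∈
      ({cUU1C, c0E1C, cE01C, cEE1C, cEE2C, c000C, c001C} : Set (DegClass × DegClass × ℕ)) ∧
    (W.classOf T j = c000C → ∀ v : W.V, W.IsPick v → j < v.1) ∧
    (W.classOf T j = c001C → ∀ v : W.V, W.IsPick v → v.1 ≤ j) := by
  classical
  obtain ⟨hTsub, hTsupp, C, hCsub, hCsupp, hHsub, hHreq, l, hl, hcount⟩ := hT
  have hReq : ∀ v : W.V, W.Required v → 0 < W.deg T v + W.deg C v := by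
    intro v hv
    have := hHreq v hv
    rwa [W.deg_add] at this
  have pick_ne_a : ∀ v : W.V, W.IsPick v → v ≠ W.aV j := by
    intro v hv h
    rw [h] at hv
    simp [Warehouse.IsPick, Warehouse.aV] at hv
  have pick_ne_b : ∀ v : W.V, W.IsPick v → v ≠ W.bV j := by
    intro v hv h
    rw [h] at hv
    simp [Warehouse.IsPick, Warehouse.bV] at hv
  have himp000 : (∀ w, W.deg T w = 0) → ∀ v : W.V, W.IsPick v → j < v.1 := by
    intro hTz v hv
    by_contra hle
    push_neg at hle
    have h1 : W.vfst v ≤ j.val := Fin.le_def.mp hle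
    have hC0 := W.degC_interior hCsupp h1 (pick_ne_a v hv) (pick_ne_b v hv)
    have h2 := hReq v (Or.inl hv)
    rw [hTz v, hC0] at h2
    omega
  by_cases hsep : ∃ v, 0 < W.deg T v ∧ ¬ (W.sgraph T).Reachable v (W.aV j) ∧
      ¬ (W.sgraph T).Reachable v (W.bV j)
  · obtain ⟨v, hv, hra, hrb⟩ := hsep
    obtain ⟨hC0, hreach⟩ := W.sep_lemma hTsupp hCsupp hl hcount hv hra hrb
    have hdegC : ∀ w, W.deg C w = 0 := fun w =>
      Finset.sum_eq_zero fun e _ => by rw [hC0 e]; ring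
    have hdegH : ∀ w, W.deg (fun e => T e + C e) w = W.deg T w := by
      intro w
      rw [W.deg_add, hdegC w, Nat.add_zero]
    have hda : W.deg T (W.aV j) = 0 := by
      by_contra h
      exact hra (hreach _ (by rw [hdegH]; omega))
    have hdb : W.deg T (W.bV j) = 0 := by
      by_contra h
      exact hrb (hreach _ (by rw [hdegH]; omega))
    have hnum : W.numComp T = 1 := by
      refine W.numComp_eq_one hv fun w hw => ?_
      exact (W.reach_induce (hreach w (by rw [hdegH]; exact hw)) hv hw).symm
    have hclass : W.classOf T j = c001C := by
      unfold Warehouse.classOf c001C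
      rw [hda, hdb, hnum]
      rfl
    refine ⟨?_, ?_, ?_⟩
    · rw [hclass]
      simp only [Set.mem_insert_iff, Set.mem_singleton_iff]
      tauto
    · rw [hclass]; intro h; simp [c001C, c000C, c001C, cUU1C, c0E1C, cE01C, cEE1C, cEE2C] at h
    · intro _ w hw
      by_contra hgt
      push_neg at hgt
      have hfar : j.val < W.vfst w := Fin.lt_def.mp hgt
      have h0 := W.degT_far hTsupp hfar
      have h2 := hReq w (Or.inl hw)
      have h3 := hdegC w
      omega
  · push_neg at hsep
    have hcov : ∀ v, 0 < W.deg T v →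
        (W.sgraph T).Reachable v (W.aV j) ∨ (W.sgraph T).Reachable v (W.bV j) := by
      intro v hv
      by_cases h : (W.sgraph T).Reachable v (W.aV j)
      · exact Or.inl h
      · exact Or.inr (hsep v hv h)
    by_cases hTz : ∀ w, W.deg T w = 0
    · have hda : W.deg T (W.aV j) = 0 := hTz _
      have hdb : W.deg T (W.bV j) = 0 := hTz _
      have hnum := W.numComp_eq_zero hTz
      have hclass : W.classOf T j = c000C := by
        unfold Warehouse.classOf c000C
        rw [hda, hdb, hnum]
        rfl
      refine ⟨?_, ?_, ?_⟩
      · rw [hclass]; exact Or.inr (Or.inr (Or.inr (Or.inr (Or.inr (Or.inl rfl)))))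
      · intro _; exact himp000 hTz
      · rw [hclass]; intro h; simp [c000C, c000C, c001C, cUU1C, c0E1C, cE01C, cEE1C, cEE2C] at h
    · push_neg at hTz
      obtain ⟨w0, hw0⟩ := hTz
      have hw0p : 0 < W.deg T w0 := Nat.pos_of_ne_zero hw0
      have hpar := W.parity_ab hTsupp hCsupp hl hcount
      by_cases hda : W.deg T (W.aV j) = 0
      · by_cases hdb : W.deg T (W.bV j) = 0
        · exfalso
          rcases hcov w0 hw0p with h | h
          · exact W.noreach hda hw0p h
          · exact W.noreach hdb hw0p h
        · have hbp : 0 < W.deg T (W.bV j) := Nat.pos_of_ne_zero hdb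
          have hallb : ∀ u, 0 < W.deg T u → (W.sgraph T).Reachable u (W.bV j) := by
            intro u hu
            rcases hcov u hu with h | h
            · exact absurd h (W.noreach hda hu)
            · exact h
          have hnum : W.numComp T = 1 :=
            W.numComp_eq_one hbp fun w hw => W.reach_induce (hallb w hw) hw hbp
          have hbe : Even (W.deg T (W.bV j)) := by
            rw [hda, zero_add] at hpar; exact hpar
          have hclass : W.classOf T j = c0E1C := by
            unfold Warehouse.classOf c0E1C
            rw [hda, hnum, Warehouse.degClass_of_evenPos hdb (Nat.even_iff.mp hbe)]
            rfl
          refine ⟨?_, ?_, ?_⟩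
          · rw [hclass]; exact Or.inr (Or.inl rfl)
          · rw [hclass]; intro h; simp [c0E1C, c000C, c001C, cUU1C, c0E1C, cE01C, cEE1C, cEE2C] at h
          · rw [hclass]; intro h; simp [c0E1C, c000C, c001C, cUU1C, c0E1C, cE01C, cEE1C, cEE2C] at h
      · by_cases hdb : W.deg T (W.bV j) = 0
        · have hap : 0 < W.deg T (W.aV j) := Nat.pos_of_ne_zero hda
          have halla : ∀ u, 0 < W.deg T u → (W.sgraph T).Reachable u (W.aV j) := by
            intro u hu
            rcases hcov u hu with h | h
            · exact h
            · exact absurd h (W.noreach hdb hu)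
          have hnum : W.numComp T = 1 :=
            W.numComp_eq_one hap fun w hw => W.reach_induce (halla w hw) hw hap
          have hae : Even (W.deg T (W.aV j)) := by
            rw [hdb, add_zero] at hpar; exact hpar
          have hclass : W.classOf T j = cE01C := by
            unfold Warehouse.classOf cE01C
            rw [hdb, hnum, Warehouse.degClass_of_evenPos hda (Nat.even_iff.mp hae)]
            rfl
          refine ⟨?_, ?_, ?_⟩
          · rw [hclass]; exact Or.inr (Or.inr (Or.inl rfl))
          · rw [hclass]; intro h; simp [cE01C, c000C, c001C, cUU1C, c0E1C, cE01C, cEE1C, cEE2C] at h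
          · rw [hclass]; intro h; simp [cE01C, c000C, c001C, cUU1C, c0E1C, cE01C, cEE1C, cEE2C] at h
        · have hap : 0 < W.deg T (W.aV j) := Nat.pos_of_ne_zero hda
          have hbp : 0 < W.deg T (W.bV j) := Nat.pos_of_ne_zero hdb
          by_cases hea : Even (W.deg T (W.aV j))
          · have heb : Even (W.deg T (W.bV j)) := (Nat.even_add.mp hpar).mp hea
            have h2 : W.numComp T ≤ 2 := by
              refine W.numComp_le_two hap hbp fun w hw => ?_
              exact (hcov w hw).imp (fun h => W.reach_induce h hw hap)
                (fun h => W.reach_induce h hw hbp)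
            have h1 : 0 < W.numComp T := W.numComp_pos hap
            have hca := Warehouse.degClass_of_evenPos hda (Nat.even_iff.mp hea)
            have hcb := Warehouse.degClass_of_evenPos hdb (Nat.even_iff.mp heb)
            have h12 : W.numComp T = 1 ∨ W.numComp T = 2 := by omega
            rcases h12 with hnum | hnum
            · have hclass : W.classOf T j = cEE1C := by
                unfold Warehouse.classOf cEE1C
                rw [hca, hcb, hnum]
              refine ⟨?_, ?_, ?_⟩
              · rw [hclass]; exact Or.inr (Or.inr (Or.inr (Or.inl rfl)))
              · rw [hclass]; intro h; simp [cEE1C, c000C, c001C, cUU1C, c0E1C, cE01C, cEE1C, cEE2C] at h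
              · rw [hclass]; intro h; simp [cEE1C, c000C, c001C, cUU1C, c0E1C, cE01C, cEE1C, cEE2C] at h
            · have hclass : W.classOf T j = cEE2C := by
                unfold Warehouse.classOf cEE2C
                rw [hca, hcb, hnum]
              refine ⟨?_, ?_, ?_⟩
              · rw [hclass]; exact Or.inr (Or.inr (Or.inr (Or.inr (Or.inl rfl))))
              · rw [hclass]; intro h; simp [cEE2C, c000C, c001C, cUU1C, c0E1C, cE01C, cEE1C, cEE2C] at h
              · rw [hclass]; intro h; simp [cEE2C, c000C, c001C, cUU1C, c0E1C, cE01C, cEE1C, cEE2C] at h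
          · have hoddb : ¬ Even (W.deg T (W.bV j)) := fun h => hea ((Nat.even_add.mp hpar).mpr h)
            have hab := W.odd_reach hTsupp hCsupp hl hcount hea
            have halla : ∀ u, 0 < W.deg T u → (W.sgraph T).Reachable u (W.aV j) := by
              intro u hu
              rcases hcov u hu with h | h
              · exact h
              · exact h.trans hab.symm
            have hnum : W.numComp T = 1 :=
              W.numComp_eq_one hap fun w hw => W.reach_induce (halla w hw) hw hap
            have hca := Warehouse.degClass_of_odd (Nat.not_even_iff.mp hea)
            have hcb := Warehouse.degClass_of_odd (Nat.not_even_iff.mp hoddb)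
            have hclass : W.classOf T j = cUU1C := by
              unfold Warehouse.classOf cUU1C
              rw [hca, hcb, hnum]
            refine ⟨?_, ?_, ?_⟩
            · rw [hclass]; exact Or.inl rfl
            · rw [hclass]; intro h; simp [cUU1C, c000C, c001C, cUU1C, c0E1C, cE01C, cEE1C, cEE2C] at h
            · rw [hclass]; intro h; simp [cUU1C, c000C, c001C, cUU1C, c0E1C, cE01C, cEE1C, cEE2C] at h
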